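/- Let R be a ring, M a finitely presented R-module, and (N_n)_{n∈ℕ} a countable inverse system of Artinian R-modules. Then the natural map M ⊗_R (lim_n N_n) → lim_n (M ⊗_R N_n) is an isomorphism. -/

import Mathlib

open TensorProduct

/-- The inverse limit of an inverse system of `R`-modules indexed by `ℕ`, as a submodule of
the product. -/
def invLim (R : Type*) [CommRing R] (N : ℕ → Type*) [∀ n, AddCommGroup (N n)]
    [∀ n, Module R (N n)] (t : ∀ n, N (n + 1) →ₗ[R] N n) : Submodule R (∀ n, N n) where
  carrier := {x | ∀ n, t n (x (n + 1)) = x n}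
  add_mem' := by
    intro a b ha hb n
    simp only [Set.mem_setOf_eq] at ha hb
    simp [ha n, hb n]
  zero_mem' := by intro n; simp
  smul_mem' := by
    intro c a ha n
    simp only [Set.mem_setOf_eq] at ha
    simp [ha n]

/-- The natural map `M ⊗ lim Nₙ → lim (M ⊗ Nₙ)`, sending `m ⊗ (xₙ)ₙ` to `(m ⊗ xₙ)ₙ`. -/
noncomputable def natTensorLimMap (R : Type*) [CommRing R] (M : Type*) [AddCommGroup M]
    [Module R M] (N : ℕ → Type*) [∀ n, AddCommGroup (N n)] [∀ n, Module R (N n)]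
    (t : ∀ n, N (n + 1) →ₗ[R] N n) :
    M ⊗[R] (invLim R N t) →ₗ[R]
      invLim R (fun n => M ⊗[R] N n) (fun n => LinearMap.lTensor M (t n)) :=
  TensorProduct.lift <| LinearMap.mk₂ R
    (fun m x => ⟨fun n => m ⊗ₜ[R] (x : ∀ n, N n) n, by
      intro n
      show LinearMap.lTensor M (t n) (m ⊗ₜ[R] (x : ∀ n, N n) (n + 1)) = m ⊗ₜ[R] (x : ∀ n, N n) n
      rw [LinearMap.lTensor_tmul, x.2 n]⟩)
    (fun m₁ m₂ x => Subtype.ext (funext fun n => add_tmul m₁ m₂ _))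
    (fun c m x => Subtype.ext (funext fun n => (smul_tmul' c m _).symm))
    (fun m x y => Subtype.ext (funext fun n => tmul_add m _ _))
    (fun c m x => Subtype.ext (funext fun n => tmul_smul c m _))

/-- The composite transition map `N (n+k) → N n` of the inverse system. -/
def downMap {R : Type*} [CommRing R] (N : ℕ → Type*) [∀ n, AddCommGroup (N n)]
    [∀ n, Module R (N n)] (t : ∀ n, N (n + 1) →ₗ[R] N n) (n : ℕ) :
    ∀ k : ℕ, N (n + k) →ₗ[R] N n
  | 0 => LinearMap.id
  | k + 1 => (downMap N t n k).comp (t (n + k))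

section Aux

variable {R : Type*} [CommRing R]

/-- The `i`-th coefficient map `(Fin q → R) ⊗ X → X`. -/
noncomputable def coeffMap {q : ℕ} (X : Type*) [AddCommGroup X] [Module R X] (i : Fin q) :
    ((Fin q → R) ⊗[R] X) →ₗ[R] X :=
  (TensorProduct.lid R X).toLinearMap ∘ₗ LinearMap.rTensor X (LinearMap.proj i)

lemma coeffMap_tmul {q : ℕ} {X : Type*} [AddCommGroup X] [Module R X] (i : Fin q)
    (v : Fin q → R) (x : X) : coeffMap X i (v ⊗ₜ[R] x) = v i • x := by
  simp [coeffMap]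

lemma sum_single_coeffMap {q : ℕ} {X : Type*} [AddCommGroup X] [Module R X]
    (w : (Fin q → R) ⊗[R] X) :
    ∑ i, (Pi.single i (1 : R) : Fin q → R) ⊗ₜ[R] coeffMap X i w = w := by
  induction w using TensorProduct.induction_on with
  | zero => simp
  | tmul v x =>
      have h : ∀ i : Fin q, (Pi.single i (1 : R) : Fin q → R) ⊗ₜ[R] coeffMap X i (v ⊗ₜ[R] x)
          = (Pi.single i (v i)) ⊗ₜ[R] x := by
        intro i
        rw [coeffMap_tmul, ← smul_tmul]
        congr 1
        funext j
        by_cases hj : j = i <;> simp [Pi.single_apply, hj]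
      rw [Finset.sum_congr rfl (fun i _ => h i), ← sum_tmul]
      congr 1
      exact Finset.univ_sum_single v
  | add u w hu hw =>
      simp only [map_add, tmul_add, Finset.sum_add_distrib, hu, hw]

lemma coeffMap_lTensor {q : ℕ} {X Y : Type*} [AddCommGroup X] [Module R X]
    [AddCommGroup Y] [Module R Y] (g : X →ₗ[R] Y) (i : Fin q)
    (w : (Fin q → R) ⊗[R] X) :
    coeffMap Y i (LinearMap.lTensor (Fin q → R) g w) = g (coeffMap X i w) := by
  induction w using TensorProduct.induction_on with
  | zero => simp
  | tmul v x => rw [LinearMap.lTensor_tmul, coeffMap_tmul, coeffMap_tmul, map_smul]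
  | add u w hu hw => simp only [map_add, hu, hw]

lemma isArtinian_tensor {q : ℕ} (X : Type*) [AddCommGroup X] [Module R X] [IsArtinian R X] :
    IsArtinian R ((Fin q → R) ⊗[R] X) := by
  let e : ((Fin q → R) ⊗[R] X) ≃ₗ[R] (Fin q → X) :=
    (TensorProduct.congr (Finsupp.linearEquivFunOnFinite R R (Fin q)).symm
        (LinearEquiv.refl R X)).trans
      ((TensorProduct.finsuppScalarLeft R X (Fin q)).trans
        (Finsupp.linearEquivFunOnFinite R X (Fin q)))
  exact isArtinian_of_linearEquiv e.symm

/-- Mittag-Leffler type lemma: a compatible family of elements in the images of a morphism of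
inverse systems lifts to a compatible family, when the source system is Artinian. -/
lemma mittagLeffler {A B : ℕ → Type*}
    [∀ n, AddCommGroup (A n)] [∀ n, Module R (A n)]
    [∀ n, AddCommGroup (B n)] [∀ n, Module R (B n)]
    [∀ n, IsArtinian R (A n)]
    (s : ∀ n, A (n + 1) →ₗ[R] A n) (u : ∀ n, B (n + 1) →ₗ[R] B n)
    (f : ∀ n, A n →ₗ[R] B n)
    (hcomm : ∀ n x, f n (s n x) = u n (f (n + 1) x))
    (b : ∀ n, B n) (hb : ∀ n, u n (b (n + 1)) = b n)
    (hr : ∀ n, ∃ a, f n a = b n) :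
    ∃ a : ∀ n, A n, (∀ n, s n (a (n + 1)) = a n) ∧ (∀ n, f n (a n) = b n) := by
  classical
  let Im : ℕ → ∀ n, Submodule R (A n) :=
    fun k => Nat.rec (fun n => LinearMap.ker (f n))
      (fun _ ih n => Submodule.map (s n) (ih (n + 1))) k
  let Cst : ℕ → ∀ n, Set (A n) :=
    fun k => Nat.rec (fun n => {x | f n x = b n})
      (fun _ ih n => s n '' ih (n + 1)) k
  have h1 : ∀ k n, (Cst k n).Nonempty := by
    intro k
    induction k with
    | zero => intro n; exact hr n
    | succ k ih =>
        intro n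
        obtain ⟨x, hx⟩ := ih (n + 1)
        exact ⟨s n x, ⟨x, hx, rfl⟩⟩
  have h2 : ∀ k n, Cst (k + 1) n ⊆ Cst k n := by
    intro k
    induction k with
    | zero =>
        rintro n x ⟨y, hy, rfl⟩
        show f n (s n y) = b n
        rw [hcomm n y, hy, hb n]
    | succ k ih =>
        rintro n x ⟨y, hy, rfl⟩
        exact ⟨y, ih (n + 1) hy, rfl⟩
  have h0 : ∀ k n, Cst k n ⊆ Cst 0 n := by
    intro k
    induction k with
    | zero => intro n; exact subset_rfl
    | succ k ih => intro n; exact fun x hx => ih n (h2 k n hx)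
  have h3 : ∀ k n x y, x ∈ Cst k n → y ∈ Cst k n → x - y ∈ Im k n := by
    intro k
    induction k with
    | zero =>
        intro n x y hx hy
        show x - y ∈ LinearMap.ker (f n)
        rw [LinearMap.mem_ker, map_sub]
        rw [show f n x = b n from hx, show f n y = b n from hy, sub_self]
    | succ k ih =>
        rintro n x y ⟨x', hx', rfl⟩ ⟨y', hy', rfl⟩
        exact ⟨x' - y', ih (n + 1) x' y' hx' hy', by rw [map_sub]⟩
  have h4 : ∀ k n x v, x ∈ Cst k n → v ∈ Im k n → x + v ∈ Cst k n := by
    intro k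
    induction k with
    | zero =>
        intro n x v hx hv
        show f n (x + v) = b n
        rw [map_add, show f n x = b n from hx, LinearMap.mem_ker.mp hv, add_zero]
    | succ k ih =>
        rintro n x v ⟨x', hx', rfl⟩ hv
        obtain ⟨v', hv', rfl⟩ := Submodule.mem_map.mp hv
        exact ⟨x' + v', ih (n + 1) x' v' hx' hv', by rw [map_add]⟩
  have h5 : ∀ k n, Im (k + 1) n ≤ Im k n := by
    intro k
    induction k with
    | zero =>
        intro n v hv
        obtain ⟨v', hv', rfl⟩ := Submodule.mem_map.mp hv
        show s n v' ∈ LinearMap.ker (f n)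
        rw [LinearMap.mem_ker, hcomm n v', LinearMap.mem_ker.mp hv', map_zero]
    | succ k ih =>
        intro n
        exact Submodule.map_mono (ih (n + 1))
  have hmono : ∀ n, Antitone (fun k => Im k n) :=
    fun n => antitone_nat_of_succ_le (fun k => h5 k n)
  have hstabEx : ∀ n, ∃ K, ∀ k, K ≤ k → Im k n = Im K n := by
    intro n
    obtain ⟨K, hK⟩ := IsArtinian.monotone_stabilizes (R := R) (M := A n)
      ⟨fun k => OrderDual.toDual (Im k n), fun k l hkl => hmono n hkl⟩
    exact ⟨K, fun k hk => (hK k hk).symm⟩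
  choose K hK using hstabEx
  have hCst_stab : ∀ n k, K n ≤ k → Cst k n = Cst (K n) n := by
    intro n k hk
    induction k, hk using Nat.le_induction with
    | base => rfl
    | succ k hk ih =>
        rw [← ih]
        apply Set.Subset.antisymm (h2 k n)
        intro y hy
        obtain ⟨x, hx⟩ := h1 (k + 1) n
        have hxy : y - x ∈ Im k n := h3 k n y x hy (h2 k n hx)
        have hxy' : y - x ∈ Im (k + 1) n := by
          rw [hK n (k + 1) (le_trans hk (Nat.le_succ k))]
          rw [hK n k hk] at hxy
          exact hxy
        have := h4 (k + 1) n x (y - x) hx hxy'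
        simpa using this
  have hT3 : ∀ n x, x ∈ Cst (K n) n → ∃ y, y ∈ Cst (K (n + 1)) (n + 1) ∧ s n y = x := by
    intro n x hx
    set k := max (K n) (K (n + 1)) with hkdef
    have e1 : Cst (k + 1) n = Cst (K n) n :=
      hCst_stab n (k + 1) (le_trans (le_max_left _ _) (Nat.le_succ k))
    have e2 : Cst k (n + 1) = Cst (K (n + 1)) (n + 1) :=
      hCst_stab (n + 1) k (le_max_right _ _)
    rw [← e1] at hx
    obtain ⟨y, hy, rfl⟩ := hx
    exact ⟨y, e2 ▸ hy, rfl⟩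
  choose g hg1 hg2 using hT3
  obtain ⟨x0, hx0⟩ := h1 (K 0) 0
  let seq : ∀ n, {x : A n // x ∈ Cst (K n) n} :=
    fun n => Nat.rec ⟨x0, hx0⟩ (fun n p => ⟨g n p.1 p.2, hg1 n p.1 p.2⟩) n
  exact ⟨fun n => (seq n).1, fun n => hg2 n (seq n).1 (seq n).2,
    fun n => h0 (K n) n (seq n).2⟩

variable (N : ℕ → Type*) [∀ n, AddCommGroup (N n)] [∀ n, Module R (N n)]
  (t : ∀ n, N (n + 1) →ₗ[R] N n)

lemma natTensorLimMap_naturality {M M' : Type*} [AddCommGroup M] [Module R M]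
    [AddCommGroup M'] [Module R M'] (f : M →ₗ[R] M')
    (w : M ⊗[R] (invLim R N t)) (n : ℕ) :
    (natTensorLimMap R M' N t (LinearMap.rTensor (invLim R N t) f w)).1 n
      = LinearMap.rTensor (N n) f ((natTensorLimMap R M N t w).1 n) := by
  induction w using TensorProduct.induction_on with
  | zero => simp
  | tmul m x =>
      rw [LinearMap.rTensor_tmul]
      rfl
  | add u v hu hv =>
      simp only [map_add, Submodule.coe_add, Pi.add_apply, hu, hv]

lemma coeffMap_natTensorLimMap {q : ℕ} (i : Fin q)
    (w : (Fin q → R) ⊗[R] (invLim R N t)) (n : ℕ) :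
    (coeffMap (invLim R N t) i w).1 n
      = coeffMap (N n) i ((natTensorLimMap R (Fin q → R) N t w).1 n) := by
  induction w using TensorProduct.induction_on with
  | zero => simp
  | tmul v x =>
      rw [coeffMap_tmul]
      show (v i • x : invLim R N t).1 n = coeffMap (N n) i (v ⊗ₜ[R] x.1 n)
      rw [coeffMap_tmul]
      rfl
  | add u v hu hv =>
      simp only [map_add, Submodule.coe_add, Pi.add_apply, hu, hv]

lemma natTensorLimMap_free_bijective (q : ℕ) :
    Function.Bijective (natTensorLimMap R (Fin q → R) N t) := by
  constructor
  · rw [injective_iff_map_eq_zero]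
    intro w hw
    have hcoeff : ∀ i : Fin q, coeffMap (invLim R N t) i w = 0 := by
      intro i
      apply Subtype.ext
      funext n
      rw [show ((coeffMap (invLim R N t) i w).1 : ∀ n, N n) n
          = coeffMap (N n) i ((natTensorLimMap R (Fin q → R) N t w).1 n) from
          coeffMap_natTensorLimMap N t i w n, hw]
      simp
    rw [← sum_single_coeffMap w]
    simp [hcoeff]
  · intro z
    have hz : ∀ n, LinearMap.lTensor (Fin q → R) (t n) (z.1 (n + 1)) = z.1 n := z.2
    have hcompat : ∀ (i : Fin q) n,
        t n (coeffMap (N (n + 1)) i (z.1 (n + 1))) = coeffMap (N n) i (z.1 n) := by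
      intro i n
      rw [← coeffMap_lTensor (t n) i (z.1 (n + 1))]
      exact congrArg (coeffMap (N n) i) (hz n)
    let xs : Fin q → invLim R N t :=
      fun i => ⟨fun n => coeffMap (N n) i (z.1 n), fun n => hcompat i n⟩
    refine ⟨∑ i, (Pi.single i (1 : R) : Fin q → R) ⊗ₜ[R] xs i, ?_⟩
    apply Subtype.ext
    funext n
    have : (natTensorLimMap R (Fin q → R) N t (∑ i, (Pi.single i (1 : R) : Fin q → R) ⊗ₜ[R] xs i)).1 n
        = ∑ i, (Pi.single i (1 : R) : Fin q → R) ⊗ₜ[R] coeffMap (N n) i (z.1 n) := by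
      rw [map_sum]
      rw [AddSubmonoidClass.coe_finset_sum]
      rw [Finset.sum_apply]
      rfl
    rw [this, sum_single_coeffMap]

end Aux

/-- Let `M` be a finitely presented `R`-module and `(Nₙ)` a countable inverse system of
Artinian `R`-modules.  Then the natural map `M ⊗ (lim Nₙ) → lim (M ⊗ Nₙ)` is an
isomorphism. -/
theorem tensor_commutes_with_lim_of_artinian (R : Type*) [CommRing R]
    (M : Type*) [AddCommGroup M] [Module R M] (hfp : Module.FinitePresentation R M)
    (N : ℕ → Type*) [∀ n, AddCommGroup (N n)] [∀ n, Module R (N n)]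
    [∀ n, IsArtinian R (N n)]
    (t : ∀ n, N (n + 1) →ₗ[R] N n) :
    Function.Bijective (natTensorLimMap R M N t) := by
  classical
  obtain ⟨q, π, hπ⟩ := Module.Finite.exists_fin' R M
  have hker : (LinearMap.ker π).FG := Module.FinitePresentation.fg_ker π hπ
  obtain ⟨p, sgen, hs⟩ := Submodule.fg_iff_exists_fin_generating_family.mp hker
  let φ : (Fin p → R) →ₗ[R] (Fin q → R) := Fintype.linearCombination R sgen
  have hφrange : LinearMap.range φ = LinearMap.ker π := by
    rw [← hs]
    apply le_antisymm
    · rintro x ⟨y, rfl⟩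
      rw [Fintype.linearCombination_apply]
      exact Submodule.sum_mem _ fun i _ =>
        Submodule.smul_mem _ _ (Submodule.subset_span ⟨i, rfl⟩)
    · rw [Submodule.span_le]
      rintro x ⟨i, rfl⟩
      exact ⟨Pi.single i 1, by simp [φ]⟩
  have hexact : ∀ n : ℕ,
      Function.Exact (LinearMap.rTensor (N n) φ) (LinearMap.rTensor (N n) π) :=
    fun n => rTensor_exact (N n) (LinearMap.exact_iff.mpr hφrange.symm) hπ
  haveI : ∀ n, IsArtinian R ((Fin q → R) ⊗[R] N n) := fun n => isArtinian_tensor (N n)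
  haveI : ∀ n, IsArtinian R ((Fin p → R) ⊗[R] N n) := fun n => isArtinian_tensor (N n)
  have hcommπ : ∀ n (x : (Fin q → R) ⊗[R] N (n + 1)),
      LinearMap.rTensor (N n) π (LinearMap.lTensor (Fin q → R) (t n) x)
        = LinearMap.lTensor M (t n) (LinearMap.rTensor (N (n + 1)) π x) := by
    intro n x
    rw [← LinearMap.comp_apply, ← LinearMap.comp_apply,
      LinearMap.rTensor_comp_lTensor, LinearMap.lTensor_comp_rTensor]
  have hcommφ : ∀ n (x : (Fin p → R) ⊗[R] N (n + 1)),
      LinearMap.rTensor (N n) φ (LinearMap.lTensor (Fin p → R) (t n) x)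
        = LinearMap.lTensor (Fin q → R) (t n) (LinearMap.rTensor (N (n + 1)) φ x) := by
    intro n x
    rw [← LinearMap.comp_apply, ← LinearMap.comp_apply,
      LinearMap.rTensor_comp_lTensor, LinearMap.lTensor_comp_rTensor]
  constructor
  · rw [injective_iff_map_eq_zero]
    intro w hw
    obtain ⟨v, rfl⟩ := LinearMap.rTensor_surjective (invLim R N t) hπ w
    set a := natTensorLimMap R (Fin q → R) N t v with ha
    have ha0 : ∀ n, LinearMap.rTensor (N n) π (a.1 n) = 0 := by
      intro n
      rw [← natTensorLimMap_naturality N t π v n, hw]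
      rfl
    have hrange : ∀ n, ∃ c, LinearMap.rTensor (N n) φ c = a.1 n := by
      intro n
      obtain ⟨c, hc⟩ := (hexact n (a.1 n)).mp (ha0 n)
      exact ⟨c, hc⟩
    obtain ⟨c, hcompat, hc⟩ := mittagLeffler
      (fun n => LinearMap.lTensor (Fin p → R) (t n))
      (fun n => LinearMap.lTensor (Fin q → R) (t n))
      (fun n => LinearMap.rTensor (N n) φ) hcommφ (fun n => a.1 n) (fun n => a.2 n) hrange
    obtain ⟨w', hw'⟩ := (natTensorLimMap_free_bijective N t p).2 ⟨c, hcompat⟩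
    have hv : LinearMap.rTensor (invLim R N t) φ w' = v := by
      apply (natTensorLimMap_free_bijective N t q).1
      apply Subtype.ext
      funext n
      rw [natTensorLimMap_naturality N t φ w' n, hw']
      exact hc n
    have hπφ : π ∘ₗ φ = 0 := by
      apply LinearMap.ext
      intro x
      rw [LinearMap.comp_apply, LinearMap.zero_apply]
      exact LinearMap.mem_ker.mp (hφrange ▸ LinearMap.mem_range_self φ x)
    rw [← hv, ← LinearMap.comp_apply, ← LinearMap.rTensor_comp, hπφ,
      LinearMap.rTensor_zero, LinearMap.zero_apply]
  · intro z
    obtain ⟨a, hcompat, ha⟩ := mittagLeffler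
      (fun n => LinearMap.lTensor (Fin q → R) (t n))
      (fun n => LinearMap.lTensor M (t n))
      (fun n => LinearMap.rTensor (N n) π) hcommπ (fun n => z.1 n) (fun n => z.2 n)
      (fun n => LinearMap.rTensor_surjective (N n) hπ (z.1 n))
    obtain ⟨u, hu⟩ := (natTensorLimMap_free_bijective N t q).2 ⟨a, hcompat⟩
    refine ⟨LinearMap.rTensor (invLim R N t) π u, ?_⟩
    apply Subtype.ext
    funext n
    rw [natTensorLimMap_naturality N t π u n, hu]
    exact ha n
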